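/- Let A, B ∈ ℝ^{d×d} (d ≥ 1) and let C ∈ ℝ^{d×d} with A ≠ 0, B ≠ 0. Then | (A:C)/|A| · A − (B:C)/|B| · B | ≤ 3 |A − B| |C|, where A:B denotes the Frobenius inner product and |·| the Frobenius norm. -/

import Mathlib

lemma unit_vec_lipschitz {E : Type*} [NormedAddCommGroup E] [NormedSpace ℝ E]
    (A B : E) (hA : (0:ℝ) < ‖A‖) (hB : (0:ℝ) < ‖B‖) :
    ‖(‖A‖⁻¹) • A - (‖B‖⁻¹) • B‖ ≤ 2 * ‖A - B‖ / ‖B‖ := by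
  have hrw : (‖A‖⁻¹) • A - (‖B‖⁻¹) • B
      = (‖B‖⁻¹) • (A - B) + (‖A‖⁻¹ - ‖B‖⁻¹) • A := by
    module
  have h1 : |‖A‖⁻¹ - ‖B‖⁻¹| * ‖A‖ ≤ ‖A - B‖ / ‖B‖ := by
    have : ‖A‖⁻¹ - ‖B‖⁻¹ = (‖B‖ - ‖A‖) / (‖A‖ * ‖B‖) := by
      field_simp
    have hle : |‖B‖ - ‖A‖| ≤ ‖A - B‖ := by
      rw [abs_sub_comm]
      exact (abs_norm_sub_norm_le A B)
    rw [this, abs_div, abs_of_pos (mul_pos hA hB), div_mul_eq_mul_div,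
      div_le_div_iff₀ (mul_pos hA hB) hB]
    rw [mul_assoc]
    exact mul_le_mul_of_nonneg_right hle (by positivity)
  calc ‖(‖A‖⁻¹) • A - (‖B‖⁻¹) • B‖
      ≤ ‖(‖B‖⁻¹) • (A - B)‖ + ‖(‖A‖⁻¹ - ‖B‖⁻¹) • A‖ := by rw [hrw]; exact norm_add_le _ _
    _ = ‖B‖⁻¹ * ‖A - B‖ + |‖A‖⁻¹ - ‖B‖⁻¹| * ‖A‖ := by
        rw [norm_smul, norm_smul, Real.norm_eq_abs, Real.norm_eq_abs,
          abs_of_pos (inv_pos.mpr hB)]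
    _ ≤ ‖A - B‖ / ‖B‖ + ‖A - B‖ / ‖B‖ := by
        rw [inv_mul_eq_div]
        linarith [h1]
    _ = 2 * ‖A - B‖ / ‖B‖ := by ring

/-- pointwise Lipschitz estimate for the Smagorinsky nonlinearity:
for `A, B ≠ 0`, `|(A:C)/|A| ⬝ A − (B:C)/|B| ⬝ B| ≤ 3 |A − B| |C|`.
Matrices in `ℝ^{d×d}` with the Frobenius inner product `A:C` and Frobenius norm
are modeled as `EuclideanSpace ℝ (Fin d × Fin d)`. -/
theorem smagorinsky_pointwise_lipschitz {d : ℕ} (hd : 1 ≤ d)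
    (A B C : EuclideanSpace ℝ (Fin d × Fin d)) (hA : A ≠ 0) (hB : B ≠ 0) :
    ‖((inner ℝ A C : ℝ) / ‖A‖) • A - ((inner ℝ B C : ℝ) / ‖B‖) • B‖ ≤ 3 * ‖A - B‖ * ‖C‖ := by
  have hA' : (0:ℝ) < ‖A‖ := norm_pos_iff.mpr hA
  have hB' : (0:ℝ) < ‖B‖ := norm_pos_iff.mpr hB
  have hrw : ((inner ℝ A C : ℝ) / ‖A‖) • A - ((inner ℝ B C : ℝ) / ‖B‖) • B
      = (((inner ℝ A C : ℝ) - (inner ℝ B C : ℝ)) * ‖A‖⁻¹) • A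
        + (inner ℝ B C : ℝ) • ((‖A‖⁻¹) • A - (‖B‖⁻¹) • B) := by
    rw [div_eq_mul_inv, div_eq_mul_inv]
    match_scalars <;> ring
  have hinner1 : |(inner ℝ A C : ℝ) - (inner ℝ B C : ℝ)| ≤ ‖A - B‖ * ‖C‖ := by
    have : (inner ℝ A C : ℝ) - (inner ℝ B C : ℝ) = (inner ℝ (A - B) C : ℝ) := by
      rw [inner_sub_left]
    rw [this]
    exact abs_real_inner_le_norm _ _
  have hinner2 : |(inner ℝ B C : ℝ)| ≤ ‖B‖ * ‖C‖ := abs_real_inner_le_norm _ _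
  have hkey := unit_vec_lipschitz A B hA' hB'
  calc ‖((inner ℝ A C : ℝ) / ‖A‖) • A - ((inner ℝ B C : ℝ) / ‖B‖) • B‖
      ≤ ‖(((inner ℝ A C : ℝ) - (inner ℝ B C : ℝ)) * ‖A‖⁻¹) • A‖
        + ‖(inner ℝ B C : ℝ) • ((‖A‖⁻¹) • A - (‖B‖⁻¹) • B)‖ := by
        rw [hrw]; exact norm_add_le _ _
    _ = |(inner ℝ A C : ℝ) - (inner ℝ B C : ℝ)| * ‖A‖⁻¹ * ‖A‖
        + |(inner ℝ B C : ℝ)| * ‖(‖A‖⁻¹) • A - (‖B‖⁻¹) • B‖ := by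
        rw [norm_smul, norm_smul, Real.norm_eq_abs, Real.norm_eq_abs, abs_mul,
          abs_of_pos (inv_pos.mpr hA')]
    _ = |(inner ℝ A C : ℝ) - (inner ℝ B C : ℝ)|
        + |(inner ℝ B C : ℝ)| * ‖(‖A‖⁻¹) • A - (‖B‖⁻¹) • B‖ := by
        field_simp
    _ ≤ ‖A - B‖ * ‖C‖ + (‖B‖ * ‖C‖) * (2 * ‖A - B‖ / ‖B‖) := by
        gcongr
    _ = 3 * ‖A - B‖ * ‖C‖ := by field_simp; ring
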